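/- Let k be a field of characteristic p and M a module over k[x] equipped with a connection ∇: a k-linear map ∇ : M → M satisfying ∇(x·s) = s + x·∇(s) for all s ∈ M (the Leibniz rule for d/dx). Then the p-th iterate ∇^p : M → M is k[x]-linear: ∇^p(f·s) = f·∇^p(s) for all f ∈ k[x] and s ∈ M. -/
import Mathlib


open Polynomial

/-- The `p`-curvature `D^p` of a connection `D` on a `k[x]`-module (for `d/dx`)
is `k[x]`-linear. -/
theorem p_curvature_is_linear {p : ℕ} (hp : p.Prime) (k : Type*) [Field k] [CharP k p]
    (M : Type*) [AddCommGroup M] [Module (Polynomial k) M] [Module k M]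
    [IsScalarTower k (Polynomial k) M]
    (D : Module.End k M)
    (hL : ∀ s : M, D ((X : Polynomial k) • s) = s + (X : Polynomial k) • D s) :
    ∀ (f : Polynomial k) (s : M), (D ^ p) (f • s) = f • (D ^ p) s := by
  have key : ∀ (n : ℕ) (s : M), (D ^ (n+1)) ((X : Polynomial k) • s)
      = (n+1) • (D ^ n) s + (X : Polynomial k) • (D ^ (n+1)) s := by
    intro n
    induction n with
    | zero => intro s; simpa using hL s
    | succ n ih =>
      intro s
      have h1 : (D ^ (n+2)) ((X : Polynomial k) • s)
          = (D ^ (n+1)) (D ((X : Polynomial k) • s)) := by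
        rw [pow_succ]; rfl
      have h2 : (D ^ (n+1)) s = (D ^ n) (D s) := by
        rw [pow_succ]; rfl
      rw [h1, hL s, map_add, ih (D s), ← h2]
      have h3 : (D ^ (n+2)) s = (D ^ (n+1)) (D s) := by
        rw [pow_succ]; rfl
      rw [← h3, succ_nsmul _ (n+1), succ_nsmul _ n]
      abel
  have hX : ∀ s : M, (D ^ p) ((X : Polynomial k) • s) = (X : Polynomial k) • (D ^ p) s := by
    obtain ⟨m, rfl⟩ : ∃ m, p = m + 1 := ⟨p - 1, (Nat.succ_pred_eq_of_pos hp.pos).symm⟩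
    intro s
    rw [key m s]
    have hz : ((m+1) : ℕ) • (D ^ m) s = 0 := by
      rw [← Nat.cast_smul_eq_nsmul k]
      simp [CharP.cast_eq_zero k (m+1)]
    rw [hz, zero_add]
  intro f s
  induction f using Polynomial.induction_on with
  | C a =>
    rw [← Polynomial.algebraMap_eq, algebraMap_smul, algebraMap_smul, map_smul]
  | add f g hf hg =>
    simp [add_smul, map_add, hf, hg]
  | monomial n a ih =>
    have h : (C a * X ^ (n+1)) • s = (X : Polynomial k) • ((C a * X ^ n) • s) := by
      rw [← mul_smul]; ring_nf
    rw [h, hX, ih, ← mul_smul]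
    congr 1
    ring
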